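/- Let n ≥ 3 and ℓ ≥ 1 be integers, and let Z be the sum of ℓ i.i.d. exponential random variables with mean n. Then P( Z ≤ ℓ/e − log n ) ≤ n^{−ℓ−e}, where e denotes Euler's number (the inequality is trivially true when ℓ/e − log n ≤ 0, since then the probability is 0). -/

import Mathlib

open MeasureTheory ProbabilityTheory

namespace Paper

private lemma pow_le_exp_pow_mul_factorial : ∀ ℓ : ℕ, (ℓ:ℝ)^ℓ ≤ (Real.exp 1)^ℓ * ℓ.factorial
  | 0 => by simp
  | (m+1) => by
    have ih := pow_le_exp_pow_mul_factorial m
    have hstep : ((m:ℝ)+1)^m ≤ Real.exp 1 * (m:ℝ)^m := by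
      rcases Nat.eq_zero_or_pos m with h | h
      · subst h; simpa using Real.one_le_exp zero_le_one
      · have hm : (0:ℝ) < m := by exact_mod_cast h
        have h1 : (m:ℝ) + 1 ≤ (m:ℝ) * Real.exp (1/m) := by
          calc (m:ℝ) + 1 = (m:ℝ) * (1/m + 1) := by field_simp; ring
            _ ≤ (m:ℝ) * Real.exp (1/m) := by nlinarith [Real.add_one_le_exp (1/(m:ℝ))]
        calc ((m:ℝ)+1)^m ≤ ((m:ℝ) * Real.exp (1/m))^m := by
              apply pow_le_pow_left₀ (by positivity) h1
          _ = (m:ℝ)^m * Real.exp (1/m)^m := mul_pow _ _ _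
          _ = (m:ℝ)^m * Real.exp (m * (1/m)) := by rw [Real.exp_nat_mul]
          _ = (m:ℝ)^m * Real.exp 1 := by rw [mul_one_div_cancel (by positivity : (m:ℝ) ≠ 0)]
          _ = Real.exp 1 * (m:ℝ)^m := mul_comm _ _
    have hfac : ((m+1:ℕ).factorial : ℝ) = (m+1) * m.factorial := by
      push_cast [Nat.factorial_succ]; ring
    have hexp : (0:ℝ) < Real.exp 1 := Real.exp_pos 1
    calc ((m+1:ℕ):ℝ)^(m+1) = ((m:ℝ)+1) * ((m:ℝ)+1)^m := by push_cast; ring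
      _ ≤ ((m:ℝ)+1) * (Real.exp 1 * (m:ℝ)^m) := by
          apply mul_le_mul_of_nonneg_left hstep (by positivity)
      _ ≤ ((m:ℝ)+1) * (Real.exp 1 * ((Real.exp 1)^m * m.factorial)) := by
          apply mul_le_mul_of_nonneg_left (mul_le_mul_of_nonneg_left ih hexp.le) (by positivity)
      _ = (Real.exp 1)^(m+1) * ((m+1:ℕ).factorial : ℝ) := by rw [hfac]; ring

private lemma key_ineq (n ℓ : ℕ) (hn : 0 < n) (hℓ : 1 ≤ ℓ)
    (ht : 0 ≤ (ℓ:ℝ) / Real.exp 1 - Real.log n) :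
    ((ℓ:ℝ) / Real.exp 1 - Real.log n) ^ ℓ ≤
      (ℓ.factorial : ℝ) * (n:ℝ) ^ (-(Real.exp 1)) := by
  have hℓ0 : (0:ℝ) < ℓ := by exact_mod_cast hℓ
  have hn0 : (0:ℝ) < n := by exact_mod_cast hn
  have hexp : (0:ℝ) < Real.exp 1 := Real.exp_pos 1
  set t : ℝ := (ℓ:ℝ) / Real.exp 1 - Real.log n with htdef
  have he1 : Real.exp 1 ≠ 0 := hexp.ne'
  have hl0 : (ℓ:ℝ) ≠ 0 := hℓ0.ne'
  have h1 : t ≤ ((ℓ:ℝ) / Real.exp 1) * Real.exp (-(Real.exp 1 * Real.log n / ℓ)) := by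
    have h2 : (1 : ℝ) - Real.exp 1 * Real.log n / ℓ ≤
        Real.exp (-(Real.exp 1 * Real.log n / ℓ)) := by
      have := Real.add_one_le_exp (-(Real.exp 1 * Real.log n / ℓ))
      linarith
    have hmain : ((ℓ:ℝ) / Real.exp 1) * (Real.exp 1 * Real.log n / ℓ) = Real.log n := by
      field_simp
    have h3 : t = ((ℓ:ℝ) / Real.exp 1) * (1 - Real.exp 1 * Real.log n / ℓ) := by
      rw [mul_sub, mul_one, hmain, htdef]
    rw [h3]
    exact mul_le_mul_of_nonneg_left h2 (by positivity)
  have h4 : t ^ ℓ ≤ (((ℓ:ℝ) / Real.exp 1) * Real.exp (-(Real.exp 1 * Real.log n / ℓ))) ^ ℓ :=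
    pow_le_pow_left₀ ht h1 ℓ
  have h5 : (Real.exp (-(Real.exp 1 * Real.log n / ℓ))) ^ ℓ
      = Real.exp (-(Real.exp 1 * Real.log n)) := by
    rw [← Real.exp_nat_mul]
    congr 1
    field_simp
  have h6 : ((ℓ:ℝ) / Real.exp 1) ^ ℓ ≤ (ℓ.factorial : ℝ) := by
    rw [div_pow, div_le_iff₀ (by positivity)]
    calc (ℓ:ℝ)^ℓ ≤ (Real.exp 1)^ℓ * ℓ.factorial := pow_le_exp_pow_mul_factorial ℓ
      _ = (ℓ.factorial : ℝ) * (Real.exp 1)^ℓ := mul_comm _ _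
  have h7 : Real.exp (-(Real.exp 1 * Real.log n)) = (n:ℝ) ^ (-(Real.exp 1)) := by
    rw [Real.rpow_def_of_pos hn0]
    congr 1
    ring
  calc t ^ ℓ ≤ (((ℓ:ℝ) / Real.exp 1) * Real.exp (-(Real.exp 1 * Real.log n / ℓ))) ^ ℓ := h4
    _ = ((ℓ:ℝ) / Real.exp 1) ^ ℓ * (Real.exp (-(Real.exp 1 * Real.log n / ℓ))) ^ ℓ :=
        mul_pow _ _ _
    _ = ((ℓ:ℝ) / Real.exp 1) ^ ℓ * Real.exp (-(Real.exp 1 * Real.log n)) := by rw [h5]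
    _ ≤ (ℓ.factorial : ℝ) * Real.exp (-(Real.exp 1 * Real.log n)) :=
        mul_le_mul_of_nonneg_right h6 (Real.exp_pos _).le
    _ = (ℓ.factorial : ℝ) * (n:ℝ) ^ (-(Real.exp 1)) := by rw [h7]

/-- The tail estimate used in Lemma 2.1: if `Z` is the sum of `ℓ ≥ 1` i.i.d. exponential
variables of mean `n` (i.e. `Z` has the Gamma distribution with shape `ℓ` and scale `n`,
that is, rate `1/n`), and `n ≥ 3`, then `P(Z ≤ ℓ/e - log n) ≤ n^{-ℓ-e}`. -/
theorem gamma_lower_tail (n ℓ : ℕ) (hn : 3 ≤ n) (hℓ : 1 ≤ ℓ) :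
    gammaMeasure (ℓ : ℝ) ((n : ℝ)⁻¹)
        (Set.Iic ((ℓ : ℝ) / Real.exp 1 - Real.log n)) ≤
      ENNReal.ofReal ((n : ℝ) ^ (-(ℓ : ℝ) - Real.exp 1)) := by
  have hn0 : (0:ℝ) < n := by positivity
  set t : ℝ := (ℓ:ℝ) / Real.exp 1 - Real.log n with htdef
  rcases le_or_gt t 0 with htle | htpos
  · have h0 : gammaMeasure (ℓ : ℝ) ((n : ℝ)⁻¹) (Set.Iic t) = 0 := by
      rw [gammaMeasure, withDensity_apply _ measurableSet_Iic,
        lintegral_Iic_eq_lintegral_Iio_add_Icc _ (le_refl t),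
        lintegral_gammaPDF_of_nonpos htle, zero_add,
        setLIntegral_measure_zero]
      simp [Real.volume_Icc]
    rw [h0]
    exact zero_le
  · obtain ⟨m, rfl⟩ : ∃ m, ℓ = m + 1 := ⟨ℓ - 1, (Nat.succ_pred_eq_of_pos hℓ).symm⟩
    have hGamma : Real.Gamma ((m+1:ℕ):ℝ) = m.factorial := by
      push_cast
      exact Real.Gamma_nat_eq_factorial m
    set c : ℝ := ((n:ℝ)⁻¹)^(m+1) / m.factorial with hcdef
    have hc0 : 0 ≤ c := by positivity
    rw [gammaMeasure, withDensity_apply _ measurableSet_Iic,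
      lintegral_Iic_eq_lintegral_Iio_add_Icc _ htpos.le,
      lintegral_gammaPDF_of_nonpos (le_refl (0:ℝ)), zero_add]
    have hbound : ∫⁻ x in Set.Icc 0 t, gammaPDF ((m+1:ℕ):ℝ) ((n : ℝ)⁻¹) x ≤
        ∫⁻ x in Set.Icc 0 t, ENNReal.ofReal (c * x ^ m) := by
      apply setLIntegral_mono (by measurability)
      intro x hx
      rw [gammaPDF_of_nonneg hx.1]
      apply ENNReal.ofReal_le_ofReal
      have hx1 : ((n:ℝ)⁻¹) ^ ((m+1:ℕ):ℝ) = ((n:ℝ)⁻¹)^(m+1) := Real.rpow_natCast _ _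
      have hx2 : x ^ (((m+1:ℕ):ℝ) - 1) = x ^ m := by
        have : ((m+1:ℕ):ℝ) - 1 = (m:ℕ) := by push_cast; ring
        rw [this, Real.rpow_natCast]
      rw [hx1, hx2, hGamma]
      have hexple : Real.exp (-((n:ℝ)⁻¹ * x)) ≤ 1 := by
        apply Real.exp_le_one_iff.mpr
        have h9 : (0:ℝ) ≤ (n:ℝ)⁻¹ * x := mul_nonneg (by positivity) hx.1
        linarith
      calc ((n:ℝ)⁻¹)^(m+1) / m.factorial * x ^ m * Real.exp (-((n:ℝ)⁻¹ * x))
          ≤ ((n:ℝ)⁻¹)^(m+1) / m.factorial * x ^ m * 1 := by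
            apply mul_le_mul_of_nonneg_left hexple
            have : (0:ℝ) ≤ x ^ m := pow_nonneg hx.1 m
            positivity
        _ = c * x ^ m := by rw [mul_one]
    have hcompute : ∫⁻ x in Set.Icc 0 t, ENNReal.ofReal (c * x ^ m) =
        ENNReal.ofReal (c * (t ^ (m+1) / (m+1))) := by
      rw [← ofReal_integral_eq_lintegral_ofReal]
      · congr 1
        rw [MeasureTheory.integral_Icc_eq_integral_Ioc,
          ← intervalIntegral.integral_of_le htpos.le,
          intervalIntegral.integral_const_mul, integral_pow]
        simp
      · apply Continuous.integrableOn_Icc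
        continuity
      · apply (ae_restrict_iff' measurableSet_Icc).mpr
        filter_upwards with x hx
        exact mul_nonneg hc0 (pow_nonneg hx.1 m)
    have hfinal : c * (t ^ (m+1) / (m+1)) ≤ (n:ℝ) ^ (-((m+1:ℕ):ℝ) - Real.exp 1) := by
      have hkey := key_ineq n (m+1) (by omega) (by omega) (by exact_mod_cast htpos.le)
      have hsplit : (n:ℝ) ^ (-((m+1:ℕ):ℝ) - Real.exp 1)
          = ((n:ℝ)⁻¹)^(m+1) * (n:ℝ) ^ (-(Real.exp 1)) := by
        rw [sub_eq_add_neg, Real.rpow_add hn0]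
        congr 1
        rw [Real.rpow_neg hn0.le, Real.rpow_natCast, inv_pow]
      have hfacmul : ((m+1:ℕ).factorial : ℝ) = (m.factorial:ℝ) * (m+1) := by
        push_cast [Nat.factorial_succ]; ring
      have hf0 : ((m:ℕ).factorial : ℝ) ≠ 0 := by positivity
      have hm1 : ((m:ℝ)+1) ≠ 0 := by positivity
      rw [hsplit]
      have hinv : (0:ℝ) < ((n:ℝ)⁻¹)^(m+1) := by positivity
      have h8 : t ^ (m+1) ≤ ((m+1:ℕ).factorial : ℝ) * (n:ℝ) ^ (-(Real.exp 1)) := by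
        exact_mod_cast hkey
      calc c * (t ^ (m+1) / (m+1))
          = ((n:ℝ)⁻¹)^(m+1) * (t ^ (m+1) / ((m+1:ℕ).factorial : ℝ)) := by
            rw [hcdef, hfacmul]
            field_simp
        _ ≤ ((n:ℝ)⁻¹)^(m+1) * (n:ℝ) ^ (-(Real.exp 1)) := by
            apply mul_le_mul_of_nonneg_left _ hinv.le
            rw [div_le_iff₀ (by positivity)]
            calc t^(m+1) ≤ ((m+1:ℕ).factorial : ℝ) * (n:ℝ) ^ (-(Real.exp 1)) := h8
              _ = (n:ℝ) ^ (-(Real.exp 1)) * ((m+1:ℕ).factorial : ℝ) := mul_comm _ _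
    calc ∫⁻ x in Set.Icc 0 t, gammaPDF ((m+1:ℕ):ℝ) ((n : ℝ)⁻¹) x
        ≤ ENNReal.ofReal (c * (t ^ (m+1) / (m+1))) := hcompute ▸ hbound
      _ ≤ ENNReal.ofReal ((n : ℝ) ^ (-((m+1:ℕ):ℝ) - Real.exp 1)) :=
          ENNReal.ofReal_le_ofReal hfinal

end Paper
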